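/- Let A be a commutative ring and let f(x) = x + b₁x² + b₂x³ + ⋯ ∈ A[[x]] be a power series with zero constant term and linear coefficient 1, with compositional inverse g(x) = x + m₁x² + m₂x³ + ⋯ (so f(g(x)) = x). Then for every k ≥ 1, the coefficient of x^{k−1} in the power series 1/(1 + b₁x + b₂x² + ⋯)^k equals k·m_{k−1} (with the convention m₀ = 1). -/

import Mathlib

open PowerSeries Finset

namespace LagrangeAux

variable {A : Type*} [CommRing A]

lemma derivative_map' {R S : Type*} [CommRing R] [CommRing S] (φ : R →+* S) (F : PowerSeries R) :
    PowerSeries.derivative S (PowerSeries.map φ F) =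
      PowerSeries.map φ (PowerSeries.derivative R F) := by
  ext n
  simp [PowerSeries.coeff_derivative, PowerSeries.coeff_map]

lemma coeff_pow_eq_of_nice {R : Type*} [CommRing R] [IsDomain R] [CharZero R]
    (H : PowerSeries R) (v : ℕ) :
    PowerSeries.coeff (v+1) (H ^ (v+1)) =
      PowerSeries.coeff v (H ^ v * PowerSeries.derivative R H) := by
  have hd : PowerSeries.derivative R (H ^ (v+1)) =
      (v+1) • (H ^ v • PowerSeries.derivative R H) := by
    simpa using Derivation.leibniz_pow (PowerSeries.derivative R) (a := H) (v+1)
  have h2 : PowerSeries.coeff v (PowerSeries.derivative R (H ^ (v+1)))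
      = PowerSeries.coeff (v+1) (H ^ (v+1)) * (v+1) := PowerSeries.coeff_derivative _ _
  rw [hd] at h2
  have h3 : PowerSeries.coeff v ((v+1) • (H ^ v • PowerSeries.derivative R H))
      = ((v:R)+1) * PowerSeries.coeff v (H ^ v * PowerSeries.derivative R H) := by
    rw [smul_eq_mul, map_nsmul, nsmul_eq_mul]
    push_cast
    ring
  rw [h3] at h2
  have hne : ((v:R)+1) ≠ 0 := Nat.cast_add_one_ne_zero v
  apply mul_left_cancel₀ hne
  rw [h2]; ring

end LagrangeAux

namespace LagrangeAux

lemma coeff_pow_eq {A : Type*} [CommRing A] (H : PowerSeries A) (v : ℕ) :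
    PowerSeries.coeff (v+1) (H ^ (v+1)) =
      PowerSeries.coeff v (H ^ v * PowerSeries.derivative A H) := by
  set R := MvPolynomial ℕ ℤ
  set HR : PowerSeries R := PowerSeries.mk fun i => MvPolynomial.X i with hHR
  set φ : R →+* A :=
    (MvPolynomial.eval₂Hom (Int.castRingHom A) (fun i => PowerSeries.coeff i H)) with hφ
  have hmap : PowerSeries.map φ HR = H := by
    ext n
    rw [PowerSeries.coeff_map, hHR, PowerSeries.coeff_mk]
    exact MvPolynomial.eval₂Hom_X' _ _ _
  have key := congrArg φ (coeff_pow_eq_of_nice HR v)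
  rw [← hmap, derivative_map']
  simp only [← map_pow, ← map_mul, PowerSeries.coeff_map]
  exact key

end LagrangeAux

namespace LagrangeAux

section Pcomp

variable {A : Type*} [CommRing A] {g : PowerSeries A}

/-- coefficientwise composition `P ∘ g`. -/
noncomputable def pcomp (g P : PowerSeries A) : PowerSeries A :=
  PowerSeries.mk fun m => ∑ n ∈ range (m+1),
    PowerSeries.coeff n P * PowerSeries.coeff m (g ^ n)

lemma coeff_pcomp (P : PowerSeries A) (m : ℕ) :
    PowerSeries.coeff m (pcomp g P)
      = ∑ n ∈ range (m+1), PowerSeries.coeff n P * PowerSeries.coeff m (g ^ n) := by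
  simp [pcomp]

variable (hg : PowerSeries.constantCoeff g = 0)
include hg

lemma coeff_g_pow {i m : ℕ} (h : m < i) : PowerSeries.coeff m (g ^ i) = 0 :=
  PowerSeries.X_pow_dvd_iff.mp
    (pow_dvd_pow_of_dvd (PowerSeries.X_dvd_iff.mpr hg) i) m h

lemma coeff_eval₂ (q : Polynomial A) (m : ℕ) :
    PowerSeries.coeff m (Polynomial.eval₂ (PowerSeries.C) g q)
      = ∑ i ∈ range (m+1), q.coeff i * PowerSeries.coeff m (g ^ i) := by
  rw [Polynomial.eval₂_eq_sum_range, map_sum]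
  simp only [PowerSeries.coeff_C_mul]
  set N := max (q.natDegree + 1) (m + 1) with hN
  rw [show (∑ i ∈ range (q.natDegree+1), q.coeff i * PowerSeries.coeff m (g ^ i))
      = ∑ i ∈ range N, q.coeff i * PowerSeries.coeff m (g ^ i) from
    Finset.sum_subset (Finset.range_subset_range.mpr (le_max_left _ _)) (by
      intro i _ hi
      rw [Polynomial.coeff_eq_zero_of_natDegree_lt (by simpa using hi), zero_mul])]
  exact (Finset.sum_subset (Finset.range_subset_range.mpr (le_max_right _ _)) (by
    intro i _ hi
    rw [coeff_g_pow hg (by simpa using hi), mul_zero])).symm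

lemma coeff_pcomp_trunc (P : PowerSeries A) {m N : ℕ} (h : m < N) :
    PowerSeries.coeff m (pcomp g P)
      = PowerSeries.coeff m (Polynomial.eval₂ (PowerSeries.C) g (PowerSeries.trunc N P)) := by
  rw [coeff_eval₂ hg, coeff_pcomp]
  refine Finset.sum_congr rfl fun i hi => ?_
  rw [PowerSeries.coeff_trunc, if_pos (by simp at hi; omega)]

lemma pcomp_mul (P Q : PowerSeries A) :
    pcomp g (P * Q) = pcomp g P * pcomp g Q := by
  ext m
  set N := m + 1 with hN
  set p := PowerSeries.trunc N P
  set q := PowerSeries.trunc N Q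
  have h1 : PowerSeries.coeff m (pcomp g (P * Q))
      = PowerSeries.coeff m (Polynomial.eval₂ (PowerSeries.C) g (p * q)) := by
    rw [coeff_pcomp, coeff_eval₂ hg]
    refine Finset.sum_congr rfl fun i hi => ?_
    have : i < N := by simp at hi; omega
    rw [PowerSeries.coeff_mul_eq_coeff_trunc_mul_trunc P Q this, ← Polynomial.coe_mul, Polynomial.coeff_coe]
  rw [h1, Polynomial.eval₂_mul, PowerSeries.coeff_mul, PowerSeries.coeff_mul]
  refine Finset.sum_congr rfl fun ab hab => ?_
  have hab' := Finset.HasAntidiagonal.mem_antidiagonal.mp hab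
  rw [← coeff_pcomp_trunc hg P (show ab.1 < N by omega),
    ← coeff_pcomp_trunc hg Q (show ab.2 < N by omega)]

lemma pcomp_one : pcomp g (1 : PowerSeries A) = 1 := by
  ext m
  rw [coeff_pcomp]
  simp [PowerSeries.coeff_one, ite_mul, Finset.sum_ite_eq']

lemma pcomp_pow (P : PowerSeries A) (n : ℕ) : pcomp g (P ^ n) = pcomp g P ^ n := by
  induction n with
  | zero => simpa using pcomp_one hg
  | succ n ih => rw [pow_succ, pcomp_mul hg, ih, pow_succ]

lemma pcomp_X : pcomp g (PowerSeries.X : PowerSeries A) = g := by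
  ext m
  rw [coeff_pcomp]
  cases m with
  | zero => simpa [PowerSeries.coeff_X] using hg.symm
  | succ m =>
    rw [Finset.sum_eq_single 1]
    · simp [PowerSeries.coeff_X]
    · intro b _ hb; simp [PowerSeries.coeff_X, hb]
    · intro h; simp at h

end Pcomp

end LagrangeAux



open LagrangeAux in
/-- Lagrange inversion (Mischenko's formula): let `f = x + b₁x² + ⋯ ∈ A[[x]]` with
compositional inverse `g = x + m₁x² + ⋯` (so `f(g(x)) = x`, stated coefficientwise:
the coefficient of `xᵏ` in `Σₙ fₙ gⁿ` is `δ_{k,1}`, a finite sum since `g(0) = 0`).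
Then for every `k ≥ 1`, the coefficient of `x^{k-1}` in `1/(1 + b₁x + b₂x² + ⋯)ᵏ`
equals `k · m_{k-1}`, where `1 + b₁x + ⋯ = f/x` and `m_{k-1}` is the coefficient of
`xᵏ` in `g` (with `m₀ = 1`). -/
theorem stmt_5 {A : Type*} [CommRing A] (f g : PowerSeries A)
    (hf0 : PowerSeries.coeff 0 f = 0) (hf1 : PowerSeries.coeff 1 f = 1)
    (hg0 : PowerSeries.coeff 0 g = 0) (hg1 : PowerSeries.coeff 1 g = 1)
    (hcomp : ∀ k : ℕ, ∑ n ∈ Finset.range (k + 1),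
        PowerSeries.coeff n f * PowerSeries.coeff k (g ^ n)
      = if k = 1 then 1 else 0) :
    ∀ k : ℕ, 1 ≤ k → ∀ w : PowerSeries A,
      (PowerSeries.mk fun n => PowerSeries.coeff (n + 1) f) ^ k * w = 1 →
      PowerSeries.coeff (k - 1) w = (k : A) * PowerSeries.coeff k g := by
  intro k hk w hw
  obtain ⟨K, rfl⟩ : ∃ K, k = K + 1 := ⟨k - 1, by omega⟩
  set F : PowerSeries A := PowerSeries.mk fun n => PowerSeries.coeff (n + 1) f with hF
  set G : PowerSeries A := PowerSeries.mk fun n => PowerSeries.coeff (n + 1) g with hG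
  have hXc : ∀ a b : PowerSeries A, PowerSeries.X * a = PowerSeries.X * b → a = b := by
    intro a b h
    ext n
    have := congrArg (PowerSeries.coeff (n+1)) h
    rwa [PowerSeries.coeff_succ_X_mul, PowerSeries.coeff_succ_X_mul] at this
  have hg0' : PowerSeries.constantCoeff g = 0 := by
    rw [← PowerSeries.coeff_zero_eq_constantCoeff_apply]; exact hg0
  have hfXF : f = PowerSeries.X * F := by
    ext n
    cases n with
    | zero =>
      rw [hf0]
      simp [PowerSeries.coeff_zero_eq_constantCoeff_apply, map_mul]
    | succ n => rw [PowerSeries.coeff_succ_X_mul, hF, PowerSeries.coeff_mk]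
  have hgXG : g = PowerSeries.X * G := by
    ext n
    cases n with
    | zero =>
      rw [hg0]
      simp [PowerSeries.coeff_zero_eq_constantCoeff_apply, map_mul]
    | succ n => rw [PowerSeries.coeff_succ_X_mul, hG, PowerSeries.coeff_mk]
  have hG0 : PowerSeries.constantCoeff G = 1 := by
    rw [← PowerSeries.coeff_zero_eq_constantCoeff_apply, hG, PowerSeries.coeff_mk]
    exact hg1
  set H : PowerSeries A := PowerSeries.invOfUnit G 1 with hH
  have hGH : G * H = 1 := PowerSeries.mul_invOfUnit G 1 (by rw [hG0]; simp)
  have hH0 : PowerSeries.constantCoeff H = 1 := by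
    rw [hH, PowerSeries.constantCoeff_invOfUnit]; simp
  have hcf : pcomp g f = PowerSeries.X := by
    ext m
    rw [coeff_pcomp, hcomp m, PowerSeries.coeff_X]
  have hgF : G * pcomp g F = 1 := by
    apply hXc
    calc PowerSeries.X * (G * pcomp g F) = (PowerSeries.X * G) * pcomp g F := by ring
      _ = g * pcomp g F := by rw [← hgXG]
      _ = pcomp g PowerSeries.X * pcomp g F := by rw [pcomp_X hg0']
      _ = pcomp g (PowerSeries.X * F) := (pcomp_mul hg0' _ _).symm
      _ = PowerSeries.X * 1 := by rw [← hfXF, hcf, mul_one]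
  have hpw : pcomp g w = G ^ (K+1) := by
    have h1 : pcomp g F ^ (K+1) * pcomp g w = 1 := by
      rw [← pcomp_pow hg0', ← pcomp_mul hg0', hw, pcomp_one hg0']
    calc pcomp g w = (G * pcomp g F) ^ (K+1) * pcomp g w := by rw [hgF, one_pow, one_mul]
      _ = G ^ (K+1) * (pcomp g F ^ (K+1) * pcomp g w) := by ring
      _ = G ^ (K+1) := by rw [h1, mul_one]
  set dg : PowerSeries A := PowerSeries.derivative A g with hdg
  have hdgdec : dg = G + PowerSeries.X * PowerSeries.derivative A G := by
    rw [hdg]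
    nth_rewrite 1 [hgXG]
    rw [Derivation.leibniz, PowerSeries.derivative_X, smul_eq_mul, smul_eq_mul, mul_one]
    ring
  have hDGH : H * PowerSeries.derivative A G = -(G * PowerSeries.derivative A H) := by
    have h0 : PowerSeries.derivative A (G * H) = 0 := by rw [hGH]; simp
    rw [Derivation.leibniz, smul_eq_mul, smul_eq_mul] at h0
    linear_combination h0
  have helperj : ∀ u : ℕ, PowerSeries.coeff u (H ^ (u+1) * dg) = if u = 0 then 1 else 0 := by
    intro u
    have hdg0 : PowerSeries.constantCoeff dg = 1 := by
      rw [← PowerSeries.coeff_zero_eq_constantCoeff_apply, hdg, PowerSeries.coeff_derivative,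
        hg1]
      simp
    cases u with
    | zero =>
      rw [if_pos rfl, PowerSeries.coeff_zero_eq_constantCoeff_apply, map_mul, pow_one,
        hH0, hdg0, one_mul]
    | succ v =>
      rw [if_neg (by omega)]
      have e1 : H ^ (v+1+1) * dg
          = H^(v+1) + PowerSeries.X * (-(H^v * PowerSeries.derivative A H)) := by
        rw [hdgdec]
        have a1 : H^(v+2) * G = H^(v+1) := by
          calc H^(v+2) * G = H^(v+1) * (G * H) := by ring
            _ = H^(v+1) := by rw [hGH, mul_one]
        have a2 : H^(v+2) * PowerSeries.derivative A G
            = -(H^v * PowerSeries.derivative A H) := by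
          calc H^(v+2) * PowerSeries.derivative A G
              = H^(v+1) * (H * PowerSeries.derivative A G) := by ring
            _ = H^(v+1) * (-(G * PowerSeries.derivative A H)) := by rw [hDGH]
            _ = -((G * H) * (H^v * PowerSeries.derivative A H)) := by ring
            _ = -(H^v * PowerSeries.derivative A H) := by rw [hGH, one_mul]
        calc H^(v+1+1) * (G + PowerSeries.X * PowerSeries.derivative A G)
            = H^(v+2)*G + PowerSeries.X * (H^(v+2) * PowerSeries.derivative A G) := by ring
          _ = _ := by rw [a1, a2]
      rw [e1, map_add, PowerSeries.coeff_succ_X_mul, coeff_pow_eq H v]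
      simp
  set M : PowerSeries A := H ^ (K+1) * dg with hM
  have final_n : ∀ n ∈ Finset.range (K+1),
      PowerSeries.coeff K (g ^ n * M) = if n = K then 1 else 0 := by
    intro n hn
    have hnK : n ≤ K := by simp at hn; omega
    have hGHpow : G ^ n * H ^ (K+1) = H ^ (K - n + 1) := by
      have hsplit : K + 1 = n + (K - n + 1) := by omega
      calc G ^ n * H ^ (K+1) = G^n * (H^n * H^(K-n+1)) := by rw [← pow_add, ← hsplit]
        _ = (G*H)^n * H^(K-n+1) := by rw [mul_pow]; ring
        _ = H^(K-n+1) := by rw [hGH, one_pow, one_mul]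
    have hrw : g ^ n * M = PowerSeries.X ^ n * (H ^ (K - n + 1) * dg) := by
      rw [hM]
      nth_rewrite 1 [hgXG]
      calc (PowerSeries.X * G)^n * (H^(K+1) * dg)
          = PowerSeries.X^n * ((G^n * H^(K+1)) * dg) := by rw [mul_pow]; ring
        _ = PowerSeries.X^n * (H^(K-n+1) * dg) := by rw [hGHpow]
    rw [hrw, PowerSeries.coeff_X_pow_mul', if_pos hnK, helperj (K-n)]
    by_cases h : n = K
    · rw [if_pos (by omega), if_pos h]
    · rw [if_neg (by omega), if_neg h]
  have hsum : ∑ n ∈ Finset.range (K+1),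
      PowerSeries.coeff n w * PowerSeries.coeff K (g^n * M)
      = PowerSeries.coeff K w := by
    rw [Finset.sum_congr rfl (fun n hn => by rw [final_n n hn])]
    simp [mul_ite, Finset.sum_ite_eq']
  set S : PowerSeries A :=
    ∑ n ∈ Finset.range (K+1), PowerSeries.C (PowerSeries.coeff n w) * g ^ n with hS
  have hSM : PowerSeries.coeff K (S * M)
      = ∑ n ∈ Finset.range (K+1),
        PowerSeries.coeff n w * PowerSeries.coeff K (g^n * M) := by
    rw [hS, Finset.sum_mul, map_sum]
    refine Finset.sum_congr rfl fun n _ => ?_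
    rw [mul_assoc, PowerSeries.coeff_C_mul]
  have hScoeff : ∀ a, a ≤ K →
      PowerSeries.coeff a S = PowerSeries.coeff a (pcomp g w) := by
    intro a ha
    rw [hS, map_sum, coeff_pcomp]
    rw [Finset.sum_congr rfl
      (fun n _ => PowerSeries.coeff_C_mul a (g ^ n) (PowerSeries.coeff n w))]
    exact (Finset.sum_subset (Finset.range_subset_range.mpr (by omega)) (fun i hi hni => by
      rw [coeff_g_pow hg0' (by simp at hi hni ⊢; omega), mul_zero])).symm
  have hprod : PowerSeries.coeff K (S * M) = PowerSeries.coeff K (pcomp g w * M) := by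
    rw [PowerSeries.coeff_mul, PowerSeries.coeff_mul]
    refine Finset.sum_congr rfl fun ab hab => ?_
    have hab' := Finset.HasAntidiagonal.mem_antidiagonal.mp hab
    rw [hScoeff ab.1 (by omega)]
  have hfin : PowerSeries.coeff K (pcomp g w * M) = PowerSeries.coeff K dg := by
    rw [hpw, hM]
    rw [show G^(K+1) * (H^(K+1) * dg) = (G*H)^(K+1) * dg by rw [mul_pow]; ring]
    rw [hGH, one_pow, one_mul]
  have hfinal : PowerSeries.coeff K w = PowerSeries.coeff K dg := by
    rw [← hsum, ← hSM, hprod, hfin]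
  rw [show K + 1 - 1 = K from rfl, hfinal, hdg, PowerSeries.coeff_derivative]
  push_cast
  ring
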